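/- Let (X, d) be a metric space equipped with a finite Borel measure μ, let ψ be a cutoff function, let x ∈ X, and let 0 < s ≤ r < 2s. Suppose there is c > 0 such that ψ_r(x) ≥ c and ψ_s(x) ≥ c, where ψ_t(x) := ∫_X ψ(d(x,z)/t) dμ(z). Then for every integrable u : X → ℝ^ν and every vector b ∈ ℝ^ν, one has ‖(ψ_r ∗ u)(x) − (ψ_s ∗ u)(x)‖ ≤ C · (r/s − 1) · (1/μ(B(x,r))) ∫_{B(x,r)} ‖u(z) − b‖ dμ(z), where C depends only on Lip(ψ), c and μ(X). -/

import Mathlib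

open MeasureTheory Metric

/-- On a metric space with finite Borel measure (total mass `V`), if `ψ` is a
cutoff function with Lipschitz constant `L`, `x ∈ X`, `0 < s ≤ r < 2s`, and
`ψ_r(x), ψ_s(x) ≥ c > 0`, then for every integrable `u : X → ℝ^ν` and every `b ∈ ℝ^ν`,
`‖(ψ_r ∗ u)(x) − (ψ_s ∗ u)(x)‖ ≤ C · (r/s − 1) · (1/μ(B(x,r))) ∫_{B(x,r)} ‖u − b‖ dμ`,
with `C` depending only on `L`, `c` and `μ(X) = V`. -/
theorem stmt_5 (L : NNReal) (c : ℝ) (V : ENNReal) (hc : 0 < c) (hV : V ≠ ⊤) :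
    ∃ C : ℝ, 0 < C ∧
      ∀ (X : Type) [MetricSpace X] [MeasurableSpace X] [BorelSpace X]
        (μ : Measure X), μ Set.univ = V →
      ∀ (ψ : ℝ → ℝ), LipschitzOnWith L ψ (Set.Ici 0) →
        (∀ t : ℝ, 0 ≤ t → ψ t ∈ Set.Icc (0 : ℝ) 1) →
        (∀ t : ℝ, 1 ≤ t → ψ t = 0) →
      ∀ (x : X) (r s : ℝ), 0 < s → s ≤ r → r < 2 * s →
        c ≤ (∫ z, ψ (dist x z / r) ∂μ) →
        c ≤ (∫ z, ψ (dist x z / s) ∂μ) →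
      ∀ (ν : ℕ) (u : X → EuclideanSpace ℝ (Fin ν)), Integrable u μ →
      ∀ b : EuclideanSpace ℝ (Fin ν),
        ‖((∫ z, ψ (dist x z / r) ∂μ)⁻¹ • ∫ z, ψ (dist x z / r) • u z ∂μ)
            - ((∫ z, ψ (dist x z / s) ∂μ)⁻¹ • ∫ z, ψ (dist x z / s) • u z ∂μ)‖
          ≤ C * (r / s - 1) *
            (((μ (ball x r)).toReal)⁻¹ * ∫ z in ball x r, ‖u z - b‖ ∂μ) := by
  refine ⟨(L : ℝ) * V.toReal / c + (L : ℝ) * V.toReal ^ 2 / c ^ 2 + 1, by positivity, ?_⟩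
  intro X _ _ _ μ hμ ψ hLip hIcc hzero x r s hs hsr hr2 hcr hcs ν u hu b
  have hr : 0 < r := hs.trans_le hsr
  haveI : IsFiniteMeasure μ := ⟨by rw [hμ]; exact hV.lt_top⟩
  have hL : (0 : ℝ) ≤ L := L.coe_nonneg
  have hε : (0:ℝ) ≤ r / s - 1 := by
    rw [sub_nonneg]; exact (one_le_div hs).mpr hsr
  -- continuity and measurability
  have hψc : ContinuousOn ψ (Set.Ici 0) := hLip.continuousOn
  have hgrc : Continuous (fun z : X => ψ (dist x z / r)) := by
    refine hψc.comp_continuous ?_ fun z => Set.mem_Ici.mpr (by positivity)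
    exact (continuous_const.dist continuous_id).div_const r
  have hgsc : Continuous (fun z : X => ψ (dist x z / s)) := by
    refine hψc.comp_continuous ?_ fun z => Set.mem_Ici.mpr (by positivity)
    exact (continuous_const.dist continuous_id).div_const s
  -- pointwise bounds
  have hgr01 : ∀ z : X, ψ (dist x z / r) ∈ Set.Icc (0:ℝ) 1 :=
    fun z => hIcc _ (by positivity)
  have hgs01 : ∀ z : X, ψ (dist x z / s) ∈ Set.Icc (0:ℝ) 1 :=
    fun z => hIcc _ (by positivity)
  have hgr0 : ∀ z, z ∉ ball x r → ψ (dist x z / r) = 0 := by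
    intro z hz
    have hd : r ≤ dist x z := by rw [dist_comm]; simpa [ball, not_lt] using hz
    exact hzero _ ((one_le_div hr).mpr hd)
  have hgs0 : ∀ z, z ∉ ball x r → ψ (dist x z / s) = 0 := by
    intro z hz
    have hd : r ≤ dist x z := by rw [dist_comm]; simpa [ball, not_lt] using hz
    exact hzero _ ((one_le_div hs).mpr (hsr.trans hd))
  -- Lipschitz pointwise bound
  have hkey : ∀ z, |ψ (dist x z / r) - ψ (dist x z / s)| ≤ (L : ℝ) * (r / s - 1) := by
    intro z
    by_cases hz : z ∈ ball x r
    · have h1 : (0:ℝ) ≤ dist x z := dist_nonneg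
      have hd : dist x z < r := by rwa [dist_comm]
      have hmem1 : dist x z / r ∈ Set.Ici (0:ℝ) := Set.mem_Ici.mpr (by positivity)
      have hmem2 : dist x z / s ∈ Set.Ici (0:ℝ) := Set.mem_Ici.mpr (by positivity)
      have hlip := hLip.dist_le_mul _ hmem1 _ hmem2
      rw [Real.dist_eq, Real.dist_eq] at hlip
      refine le_trans hlip ?_
      have hinv : (0:ℝ) ≤ 1/s - 1/r := by
        rw [sub_nonneg]; exact one_div_le_one_div_of_le hs hsr
      have h2 : |dist x z / r - dist x z / s| = dist x z * (1/s - 1/r) := by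
        rw [abs_sub_comm, abs_of_nonneg]
        · ring
        · rw [sub_nonneg]; gcongr
      have h3 : r / s - 1 = r * (1/s - 1/r) := by
        field_simp
      rw [h2, h3]
      exact mul_le_mul_of_nonneg_left
        (mul_le_mul_of_nonneg_right hd.le hinv) hL
    · rw [hgr0 z hz, hgs0 z hz, sub_zero, abs_zero]
      exact mul_nonneg hL hε
  -- integrability
  have hgr_int : Integrable (fun z : X => ψ (dist x z / r)) μ := by
    refine (integrable_const (1:ℝ)).mono' hgrc.aestronglyMeasurable (ae_of_all _ fun z => ?_)
    rw [Real.norm_eq_abs, abs_of_nonneg (hgr01 z).1]; exact (hgr01 z).2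
  have hgs_int : Integrable (fun z : X => ψ (dist x z / s)) μ := by
    refine (integrable_const (1:ℝ)).mono' hgsc.aestronglyMeasurable (ae_of_all _ fun z => ?_)
    rw [Real.norm_eq_abs, abs_of_nonneg (hgs01 z).1]; exact (hgs01 z).2
  have hv_int : Integrable (fun z => u z - b) μ := hu.sub (integrable_const b)
  have hgrv_int : Integrable (fun z => ψ (dist x z / r) • (u z - b)) μ := by
    refine hv_int.norm.mono' (hgrc.aestronglyMeasurable.smul hv_int.aestronglyMeasurable)
      (ae_of_all _ fun z => ?_)
    rw [norm_smul, Real.norm_eq_abs, abs_of_nonneg (hgr01 z).1]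
    calc ψ (dist x z / r) * ‖u z - b‖ ≤ 1 * ‖u z - b‖ := by
          gcongr; exact (hgr01 z).2
      _ = ‖u z - b‖ := one_mul _
  have hgsv_int : Integrable (fun z => ψ (dist x z / s) • (u z - b)) μ := by
    refine hv_int.norm.mono' (hgsc.aestronglyMeasurable.smul hv_int.aestronglyMeasurable)
      (ae_of_all _ fun z => ?_)
    rw [norm_smul, Real.norm_eq_abs, abs_of_nonneg (hgs01 z).1]
    calc ψ (dist x z / s) * ‖u z - b‖ ≤ 1 * ‖u z - b‖ := by
          gcongr; exact (hgs01 z).2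
      _ = ‖u z - b‖ := one_mul _
  -- abbreviations
  set ψr : ℝ := ∫ z, ψ (dist x z / r) ∂μ with hψr_def
  set ψs : ℝ := ∫ z, ψ (dist x z / s) ∂μ with hψs_def
  set Br : EuclideanSpace ℝ (Fin ν) := ∫ z, ψ (dist x z / r) • (u z - b) ∂μ with hBr_def
  set Bs : EuclideanSpace ℝ (Fin ν) := ∫ z, ψ (dist x z / s) • (u z - b) ∂μ with hBs_def
  set M : ℝ := (μ (ball x r)).toReal with hM_def
  set I : ℝ := ∫ z in ball x r, ‖u z - b‖ ∂μ with hI_def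
  have hψr_pos : 0 < ψr := hc.trans_le hcr
  have hψs_pos : 0 < ψs := hc.trans_le hcs
  have hI_nonneg : 0 ≤ I := by
    rw [hI_def]
    exact setIntegral_nonneg measurableSet_ball fun z _ => norm_nonneg _
  -- c ≤ M
  have hcM : c ≤ M := by
    refine le_trans hcr ?_
    have hind : Integrable ((ball x r).indicator fun _ => (1:ℝ)) μ :=
      (integrable_const (1:ℝ)).indicator measurableSet_ball
    have hmono : ψr ≤ ∫ z, (ball x r).indicator (fun _ => (1:ℝ)) z ∂μ := by
      refine integral_mono hgr_int hind fun z => ?_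
      by_cases hz : z ∈ ball x r
      · simp [Set.indicator_of_mem hz, (hgr01 z).2]
      · simp [Set.indicator_of_notMem hz, hgr0 z hz]
    refine hmono.trans_eq ?_
    rw [integral_indicator measurableSet_ball, setIntegral_const, smul_eq_mul, mul_one]
    exact hM_def.symm
  have hM_pos : 0 < M := hc.trans_le hcM
  have hMV : M ≤ V.toReal := by
    rw [hM_def, ← hμ]
    exact ENNReal.toReal_mono (by rw [hμ]; exact hV) (measure_mono (Set.subset_univ _))
  -- rewrite the integrals with u in terms of u - b
  have hAr : (∫ z, ψ (dist x z / r) • u z ∂μ) = Br + ψr • b := by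
    rw [hBr_def, hψr_def]
    rw [← integral_smul_const, ← integral_add hgrv_int (hgr_int.smul_const b)]
    refine integral_congr_ae (ae_of_all _ fun z => ?_)
    show ψ (dist x z / r) • u z
      = ψ (dist x z / r) • (u z - b) + ψ (dist x z / r) • b
    rw [← smul_add, sub_add_cancel]
  have hAs : (∫ z, ψ (dist x z / s) • u z ∂μ) = Bs + ψs • b := by
    rw [hBs_def, hψs_def]
    rw [← integral_smul_const, ← integral_add hgsv_int (hgs_int.smul_const b)]
    refine integral_congr_ae (ae_of_all _ fun z => ?_)
    show ψ (dist x z / s) • u z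
      = ψ (dist x z / s) • (u z - b) + ψ (dist x z / s) • b
    rw [← smul_add, sub_add_cancel]
  rw [hAr, hAs]
  have hsplit2 : ψr⁻¹ • (Br + ψr • b) - ψs⁻¹ • (Bs + ψs • b)
      = ψr⁻¹ • (Br - Bs) + (ψr⁻¹ - ψs⁻¹) • Bs := by
    rw [smul_add, smul_add, smul_smul, smul_smul,
      inv_mul_cancel₀ hψr_pos.ne', inv_mul_cancel₀ hψs_pos.ne',
      smul_sub, sub_smul]
    simp only [one_smul]
    abel
  rw [hsplit2]
  -- bound ‖Br - Bs‖
  have hBrBs : ‖Br - Bs‖ ≤ (L : ℝ) * (r / s - 1) * I := by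
    have hdiff_int : Integrable
        (fun z => (ψ (dist x z / r) - ψ (dist x z / s)) • (u z - b)) μ := by
      refine (hgrv_int.sub hgsv_int).congr (ae_of_all _ fun z => ?_)
      show ψ (dist x z / r) • (u z - b) - ψ (dist x z / s) • (u z - b) = _
      rw [← sub_smul]
    have h1 : Br - Bs = ∫ z, (ψ (dist x z / r) - ψ (dist x z / s)) • (u z - b) ∂μ := by
      rw [hBr_def, hBs_def, ← integral_sub hgrv_int hgsv_int]
      refine integral_congr_ae (ae_of_all _ fun z => ?_)
      show ψ (dist x z / r) • (u z - b) - ψ (dist x z / s) • (u z - b) = _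
      rw [← sub_smul]
    rw [h1]
    refine (norm_integral_le_integral_norm _).trans ?_
    have hind : Integrable
        ((ball x r).indicator fun z => (L:ℝ) * (r/s - 1) * ‖u z - b‖) μ :=
      ((hv_int.norm.const_mul _).indicator measurableSet_ball)
    have hmono : (∫ z, ‖(ψ (dist x z / r) - ψ (dist x z / s)) • (u z - b)‖ ∂μ)
        ≤ ∫ z, (ball x r).indicator (fun z => (L:ℝ) * (r/s - 1) * ‖u z - b‖) z ∂μ := by
      refine integral_mono hdiff_int.norm hind fun z => ?_
      by_cases hz : z ∈ ball x r
      · rw [Set.indicator_of_mem hz, norm_smul, Real.norm_eq_abs]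
        exact mul_le_mul_of_nonneg_right (hkey z) (norm_nonneg _)
      · rw [Set.indicator_of_notMem hz, hgr0 z hz, hgs0 z hz]
        simp
    refine hmono.trans_eq ?_
    rw [integral_indicator measurableSet_ball, integral_const_mul]
  -- bound ‖Bs‖
  have hBs_bound : ‖Bs‖ ≤ I := by
    rw [hBs_def]
    refine (norm_integral_le_integral_norm _).trans ?_
    have hind : Integrable ((ball x r).indicator fun z => ‖u z - b‖) μ :=
      (hv_int.norm.indicator measurableSet_ball)
    have hmono : (∫ z, ‖ψ (dist x z / s) • (u z - b)‖ ∂μ)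
        ≤ ∫ z, (ball x r).indicator (fun z => ‖u z - b‖) z ∂μ := by
      refine integral_mono hgsv_int.norm hind fun z => ?_
      by_cases hz : z ∈ ball x r
      · rw [Set.indicator_of_mem hz, norm_smul, Real.norm_eq_abs,
          abs_of_nonneg (hgs01 z).1]
        calc ψ (dist x z / s) * ‖u z - b‖ ≤ 1 * ‖u z - b‖ := by
              gcongr; exact (hgs01 z).2
          _ = ‖u z - b‖ := one_mul _
      · rw [Set.indicator_of_notMem hz, hgs0 z hz]
        simp
    refine hmono.trans_eq ?_
    rw [integral_indicator measurableSet_ball]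
  -- bound |ψr - ψs|
  have hψ_diff : |ψr - ψs| ≤ (L : ℝ) * (r / s - 1) * M := by
    have h1 : ψr - ψs = ∫ z, (ψ (dist x z / r) - ψ (dist x z / s)) ∂μ := by
      rw [hψr_def, hψs_def, ← integral_sub hgr_int hgs_int]
    rw [h1, ← Real.norm_eq_abs]
    refine (norm_integral_le_integral_norm _).trans ?_
    have hind : Integrable ((ball x r).indicator fun _ => (L:ℝ) * (r/s - 1)) μ :=
      ((integrable_const _).indicator measurableSet_ball)
    have hmono : (∫ z, ‖ψ (dist x z / r) - ψ (dist x z / s)‖ ∂μ)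
        ≤ ∫ z, (ball x r).indicator (fun _ => (L:ℝ) * (r/s - 1)) z ∂μ := by
      refine integral_mono (hgr_int.sub hgs_int).norm hind fun z => ?_
      by_cases hz : z ∈ ball x r
      · rw [Set.indicator_of_mem hz]
        exact hkey z
      · rw [Set.indicator_of_notMem hz]
        show ‖ψ (dist x z / r) - ψ (dist x z / s)‖ ≤ 0
        rw [hgr0 z hz, hgs0 z hz]
        simp
    refine hmono.trans_eq ?_
    rw [integral_indicator measurableSet_ball, setIntegral_const, smul_eq_mul, Measure.real_def, ← hM_def]
    ring
  -- bound |ψr⁻¹ - ψs⁻¹|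
  have hinv_diff : |ψr⁻¹ - ψs⁻¹| ≤ (L : ℝ) * (r / s - 1) * M / c ^ 2 := by
    have h1 : ψr⁻¹ - ψs⁻¹ = (ψs - ψr) / (ψr * ψs) := by
      field_simp
    rw [h1, abs_div, abs_sub_comm, abs_of_pos (mul_pos hψr_pos hψs_pos)]
    have h2 : c ^ 2 ≤ ψr * ψs := by
      rw [sq]; exact mul_le_mul hcr hcs hc.le hψr_pos.le
    gcongr <;> first | exact hψ_diff | positivity
  -- final assembly
  have hψr_inv : ψr⁻¹ ≤ c⁻¹ := by
    gcongr
  have hnorm : ‖ψr⁻¹ • (Br - Bs) + (ψr⁻¹ - ψs⁻¹) • Bs‖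
      ≤ ψr⁻¹ * ‖Br - Bs‖ + |ψr⁻¹ - ψs⁻¹| * ‖Bs‖ := by
    refine (norm_add_le _ _).trans ?_
    rw [norm_smul, norm_smul, Real.norm_eq_abs, Real.norm_eq_abs,
      abs_of_pos (inv_pos.mpr hψr_pos)]
  refine hnorm.trans ?_
  have hIM : I = M * (M⁻¹ * I) := by
    field_simp
  have step1 : ψr⁻¹ * ‖Br - Bs‖ ≤ c⁻¹ * ((L : ℝ) * (r / s - 1) * I) :=
    mul_le_mul hψr_inv hBrBs (norm_nonneg _) (by positivity)
  have step2 : |ψr⁻¹ - ψs⁻¹| * ‖Bs‖ ≤ ((L : ℝ) * (r / s - 1) * M / c ^ 2) * I :=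
    mul_le_mul hinv_diff hBs_bound (norm_nonneg _) (by positivity)
  refine (add_le_add step1 step2).trans ?_
  have hM0 : M ≠ 0 := hM_pos.ne'
  have hc0 : c ≠ 0 := hc.ne'
  have hQ : 0 ≤ M⁻¹ * I := by positivity
  calc c⁻¹ * ((L : ℝ) * (r / s - 1) * I) + ((L : ℝ) * (r / s - 1) * M / c ^ 2) * I
      = ((L : ℝ) * M / c + (L : ℝ) * M ^ 2 / c ^ 2) * (r / s - 1) * (M⁻¹ * I) := by
        field_simp
    _ ≤ ((L : ℝ) * V.toReal / c + (L : ℝ) * V.toReal ^ 2 / c ^ 2 + 1) * (r / s - 1)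
          * (M⁻¹ * I) := by
        gcongr ?_ * (r / s - 1) * (M⁻¹ * I)
        calc (L : ℝ) * M / c + (L : ℝ) * M ^ 2 / c ^ 2
            ≤ (L : ℝ) * V.toReal / c + (L : ℝ) * V.toReal ^ 2 / c ^ 2 := by
              gcongr <;> first | exact hMV | exact hM_pos.le | positivity
          _ ≤ _ := by linarith
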